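/- The determinant of the Hessian matrix of the function P_m^{1/2}(ξ) := √(P_m(ξ)) is nonzero at every ξ ∈ ℝⁿ \ {0}, i.e. det(∂²(P_m^{1/2})/∂ξᵢ∂ξⱼ)(ξ) ≠ 0 for all ξ ≠ 0. -/

import Mathlib

open MeasureTheory Real Filter Topology
open scoped RealInnerProductSpace

noncomputable section

/-- Evaluation of a multivariate polynomial at a point of Euclidean space. -/
def polyEval {n : ℕ} (p : MvPolynomial (Fin n) ℝ) (ξ : EuclideanSpace ℝ (Fin n)) : ℝ :=
  MvPolynomial.eval (fun i => ξ i) p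


/-- Determinant of the Hessian matrix of a real-valued function on Euclidean space. -/
def hessianDet {n : ℕ} (f : EuclideanSpace ℝ (Fin n) → ℝ) (ξ : EuclideanSpace ℝ (Fin n)) : ℝ :=
  Matrix.det (Matrix.of fun i j : Fin n =>
    iteratedFDeriv ℝ 2 f ξ ![EuclideanSpace.single i 1, EuclideanSpace.single j 1])

theorem contDiff_polyEval {n : ℕ} (p : MvPolynomial (Fin n) ℝ) :
    ContDiff ℝ 2 (polyEval p) := by
  induction p using MvPolynomial.induction_on with
  | C a =>
      have h : polyEval (MvPolynomial.C a : MvPolynomial (Fin n) ℝ) = fun _ => a := by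
        funext ξ; simp [polyEval]
      rw [h]; exact contDiff_const
  | add p q hp hq =>
      have h : polyEval (p + q) = fun ξ => polyEval p ξ + polyEval q ξ := by
        funext ξ; simp [polyEval]
      rw [h]; exact hp.add hq
  | mul_X p i hp =>
      have h : polyEval (p * MvPolynomial.X i) = fun ξ => polyEval p ξ * ξ i := by
        funext ξ; simp [polyEval]
      rw [h]; exact hp.mul (contDiff_piLp_apply (p := 2))

theorem polyEval_smul {n m : ℕ} {p : MvPolynomial (Fin n) ℝ} (hp : p.IsHomogeneous m)
    (t : ℝ) (ξ : EuclideanSpace ℝ (Fin n)) : polyEval p (t • ξ) = t ^ m * polyEval p ξ := by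
  unfold polyEval
  have h1 : (fun i => (t • ξ) i) = fun i => t * ξ i := by
    funext i; simp
  rw [h1, MvPolynomial.eval_eq', MvPolynomial.eval_eq', Finset.mul_sum]
  refine Finset.sum_congr rfl fun d hd => ?_
  have hdeg : ∑ i, d i = m := by
    have h2 := hp (MvPolynomial.mem_support_iff.mp hd)
    rw [Finsupp.weight_apply] at h2
    rw [← h2]
    rw [Finsupp.sum]
    simp only [Pi.one_apply, smul_eq_mul, mul_one]
    exact (Finset.sum_subset (Finset.subset_univ _) (fun i _ hi => by
      simpa using Finsupp.notMem_support_iff.mp hi)).symm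
  calc MvPolynomial.coeff d p * ∏ i, (t * ξ i) ^ d i
      = MvPolynomial.coeff d p * ((∏ i, t ^ d i) * ∏ i, ξ i ^ d i) := by
        rw [← Finset.prod_mul_distrib]; simp [mul_pow]
    _ = t ^ m * (MvPolynomial.coeff d p * ∏ i, ξ i ^ d i) := by
        rw [Finset.prod_pow_eq_pow_sum, hdeg]; ring

theorem hessianDet_eq {n : ℕ} (g : EuclideanSpace ℝ (Fin n) → ℝ) (ξ : EuclideanSpace ℝ (Fin n)) :
    hessianDet g ξ = (Matrix.of fun i j : Fin n =>
      fderiv ℝ (fderiv ℝ g) ξ (EuclideanSpace.single i 1) (EuclideanSpace.single j 1)).det := by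
  unfold hessianDet
  congr 1
  ext i j
  rw [Matrix.of_apply, Matrix.of_apply, iteratedFDeriv_two_apply]
  simp

set_option maxHeartbeats 1000000 in
/-- Equation (5.1): under (H1) and (H2), the Hessian determinant of `P_m^{1/2}` is
nonzero away from the origin. -/
theorem hessianDet_sqrt_principal_ne_zero (n m : ℕ) (hn : 2 ≤ n) (hm4 : 4 ≤ m)
    (hmeven : Even m) (p : MvPolynomial (Fin n) ℝ) (hdeg : p.totalDegree = m)
    (hpos : ∀ ξ : EuclideanSpace ℝ (Fin n), 0 < polyEval p ξ)
    (hell : ∀ ξ : EuclideanSpace ℝ (Fin n), ξ ≠ 0 →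
        0 < polyEval (MvPolynomial.homogeneousComponent m p) ξ)
    (hnondeg : ∀ ξ : EuclideanSpace ℝ (Fin n), ξ ≠ 0 →
        hessianDet (polyEval (MvPolynomial.homogeneousComponent m p)) ξ ≠ 0) :
    ∀ ξ : EuclideanSpace ℝ (Fin n), ξ ≠ 0 →
      hessianDet
        (fun ξ' => Real.sqrt (polyEval (MvPolynomial.homogeneousComponent m p) ξ')) ξ ≠ 0 := by

  intro ξ hξ
  rw [hessianDet_eq]
  replace hnondeg : ∀ ξ : EuclideanSpace ℝ (Fin n), ξ ≠ 0 →
      (Matrix.of fun i j : Fin n =>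
        fderiv ℝ (fderiv ℝ (polyEval (MvPolynomial.homogeneousComponent m p))) ξ
          (EuclideanSpace.single i 1) (EuclideanSpace.single j 1)).det ≠ 0 := fun ξ' hξ' => by
    rw [← hessianDet_eq]; exact hnondeg ξ' hξ'
  set Q : EuclideanSpace ℝ (Fin n) → ℝ := polyEval (MvPolynomial.homogeneousComponent m p)
    with hQdef
  have hhomog : (MvPolynomial.homogeneousComponent m p).IsHomogeneous m :=
    MvPolynomial.homogeneousComponent_isHomogeneous m p
  have hQc : ContDiff ℝ 2 Q := contDiff_polyEval _
  have hQd : Differentiable ℝ Q := hQc.differentiable (by norm_num)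
  have hQ'c : ContDiff ℝ 1 (fderiv ℝ Q) := hQc.fderiv_right (by norm_num)
  have hQ'd : Differentiable ℝ (fderiv ℝ Q) := hQ'c.differentiable one_ne_zero
  have hsm : ∀ (t : ℝ) (x : EuclideanSpace ℝ (Fin n)), Q (t • x) = t ^ m * Q x :=
    fun t x => polyEval_smul hhomog t x
  set q := Q ξ with hq_def
  have hq : 0 < q := hell ξ hξ
  set s := Real.sqrt q with hs_def
  have hs : 0 < s := Real.sqrt_pos.mpr hq
  have hsq : s ^ 2 = q := Real.sq_sqrt hq.le
  set L := fderiv ℝ Q ξ with hL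
  set B := fderiv ℝ (fderiv ℝ Q) ξ with hB
  have hT : HasDerivAt (fun t : ℝ => t • ξ) ξ 1 := by
    simpa using (hasDerivAt_id (1:ℝ)).smul_const ξ
  -- Euler 1
  have euler1 : L ξ = m * q := by
    have hf : HasFDerivAt Q L ((1:ℝ) • ξ) := by
      rw [one_smul]; exact (hQd ξ).hasFDerivAt
    have h1 : HasDerivAt (fun t : ℝ => Q (t • ξ)) (L ξ) 1 := by
      have := hf.comp_hasDerivAt (x := (1:ℝ)) hT; exact this
    have h2 : HasDerivAt (fun t : ℝ => t ^ m * q) ((m : ℝ) * 1 ^ (m-1) * q) 1 :=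
      (hasDerivAt_pow m 1).mul_const q
    have heq : (fun t : ℝ => t ^ m * q) = fun t : ℝ => Q (t • ξ) :=
      funext fun t => (hsm t ξ).symm
    rw [heq] at h2
    simpa using h1.unique h2
  -- homogeneity of the gradient
  have hstep2 : ∀ t : ℝ, t ≠ 0 → ∀ x, fderiv ℝ Q (t • x) = t ^ (m-1) • fderiv ℝ Q x := by
    intro t ht x
    have hA : HasFDerivAt (fun y => Q (t • y)) (t • fderiv ℝ Q (t • x)) x := by
      have h1 : HasFDerivAt Q (fderiv ℝ Q (t • x)) (t • x) := (hQd _).hasFDerivAt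
      have h2 : HasFDerivAt (fun y : EuclideanSpace ℝ (Fin n) => t • y)
          (t • ContinuousLinearMap.id ℝ (EuclideanSpace ℝ (Fin n))) x :=
        (t • ContinuousLinearMap.id ℝ (EuclideanSpace ℝ (Fin n))).hasFDerivAt
      have h3 := h1.comp x h2
      refine h3.congr_fderiv ?_
      ext v
      simp
    have hB' : HasFDerivAt (fun y => Q (t • y)) (t ^ m • fderiv ℝ Q x) x := by
      have h4 : HasFDerivAt (fun y => t ^ m * Q y) (t ^ m • fderiv ℝ Q x) x :=
        ((hQd x).hasFDerivAt).const_mul (t ^ m)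
      have heq : (fun y => t ^ m * Q y) = fun y => Q (t • y) :=
        funext fun y => (hsm t y).symm
      rwa [heq] at h4
    have huniq : t • fderiv ℝ Q (t • x) = t ^ m • fderiv ℝ Q x := hA.unique hB'
    have h5 := congrArg (fun A => t⁻¹ • A) huniq
    simp only [smul_smul, inv_mul_cancel₀ ht, one_smul] at h5
    rw [h5]
    congr 1
    rw [pow_sub₀ t ht (by omega : 1 ≤ m), pow_one]
    field_simp
  -- Euler 2
  have euler2 : B ξ = ((m:ℝ) - 1) • L := by
    have hf : HasFDerivAt (fderiv ℝ Q) B ((1:ℝ) • ξ) := by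
      rw [one_smul]; exact (hQ'd ξ).hasFDerivAt
    have h1 : HasDerivAt (fun t : ℝ => fderiv ℝ Q (t • ξ)) (B ξ) 1 := by
      have := hf.comp_hasDerivAt (x := (1:ℝ)) hT; exact this
    have h2 : HasDerivAt (fun t : ℝ => t ^ (m-1) • L)
        ((((m-1 : ℕ)) * 1 ^ (m-1-1) : ℝ) • L) 1 :=
      (hasDerivAt_pow (m-1) 1).smul_const L
    have hEq : (fun t : ℝ => fderiv ℝ Q (t • ξ)) =ᶠ[nhds 1] fun t : ℝ => t ^ (m-1) • L := by
      filter_upwards [isOpen_ne.mem_nhds (one_ne_zero : (1:ℝ) ≠ 0)] with t ht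
      exact hstep2 t ht ξ
    have h3 : HasDerivAt (fun t : ℝ => fderiv ℝ Q (t • ξ))
        ((((m-1 : ℕ)) * 1 ^ (m-1-1) : ℝ) • L) 1 := h2.congr_of_eventuallyEq hEq
    have h4 := h1.unique h3
    rw [h4]
    congr 1
    have : ((m - 1 : ℕ) : ℝ) = (m : ℝ) - 1 := by
      rw [Nat.cast_sub (by omega)]; norm_num
    simp [this]
  -- the function f = sqrt ∘ Q
  set f : EuclideanSpace ℝ (Fin n) → ℝ := fun x => Real.sqrt (Q x) with hf_def
  have hfderiv : ∀ x : EuclideanSpace ℝ (Fin n), x ≠ 0 →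
      fderiv ℝ f x = (2 * Real.sqrt (Q x))⁻¹ • fderiv ℝ Q x := by
    intro x hx
    have hQx := hell x hx
    have h : HasFDerivAt f ((1 / (2 * Real.sqrt (Q x))) • fderiv ℝ Q x) x :=
      (Real.hasDerivAt_sqrt hQx.ne').comp_hasFDerivAt x (hQd x).hasFDerivAt
    rw [h.fderiv, one_div]
  set a : ℝ := (2 * s)⁻¹ with ha_def
  set d : ℝ := -(2 * (1 / (2 * s))) / (2 * s) ^ 2 with hd_def
  have ha0 : a ≠ 0 := by
    rw [ha_def]
    positivity
  have hgd : HasFDerivAt (fun x => (2 * Real.sqrt (Q x))⁻¹) (d • L) ξ := by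
    have h1 : HasDerivAt (fun y : ℝ => (2 * Real.sqrt y)⁻¹) d q :=
      ((Real.hasDerivAt_sqrt hq.ne').const_mul 2).inv (by positivity)
    exact h1.comp_hasFDerivAt (f := Q) ξ (hQd ξ).hasFDerivAt
  have hG : HasFDerivAt (fun x => (2 * Real.sqrt (Q x))⁻¹ • fderiv ℝ Q x)
      (a • B + (d • L).smulRight L) ξ :=
    hgd.smul (hQ'd ξ).hasFDerivAt
  have hsnd : fderiv ℝ (fderiv ℝ f) ξ = a • B + (d • L).smulRight L := by
    have hev : fderiv ℝ f =ᶠ[nhds ξ]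
        fun x => (2 * Real.sqrt (Q x))⁻¹ • fderiv ℝ Q x := by
      filter_upwards [isOpen_ne.mem_nhds hξ] with x hx
      exact hfderiv x hx
    rw [hev.fderiv_eq, hG.fderiv]
  -- matrices
  set e : Fin n → EuclideanSpace ℝ (Fin n) := fun i => EuclideanSpace.single i 1 with he
  set MQ : Matrix (Fin n) (Fin n) ℝ := Matrix.of fun i j => B (e i) (e j) with hMQ
  set w : Fin n → ℝ := fun i => L (e i) with hw
  set ξv : Fin n → ℝ := fun i => ξ i with hxv
  have hdetMQ : MQ.det ≠ 0 := hnondeg ξ hξ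
  have hsymm : ∀ u v, B u v = B v u := fun u v =>
    second_derivative_symmetric (fun y => (hQd y).hasFDerivAt) (hQ'd ξ).hasFDerivAt u v
  have hxsum : ∑ j, ξv j • e j = ξ := by
    have := (EuclideanSpace.basisFun (Fin n) ℝ).sum_repr ξ
    simpa [EuclideanSpace.basisFun_apply, EuclideanSpace.basisFun_repr, he, hxv] using this
  have hr : ((m:ℝ) - 1) ≠ 0 := by
    have : (4:ℝ) ≤ m := by exact_mod_cast hm4
    linarith
  have hmulvec : MQ.mulVec ξv = ((m:ℝ) - 1) • w := by
    funext i
    have h1 : MQ.mulVec ξv i = ∑ j, ξv j * B (e i) (e j) := by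
      simp [Matrix.mulVec, dotProduct, hMQ, mul_comm]
    have h2 : ∑ j, ξv j * B (e i) (e j) = B (e i) ξ := by
      rw [← hxsum, map_sum]
      simp
    rw [h1, h2, hsymm (e i) ξ, euler2]
    simp [hw]
  set u : Fin n → ℝ := ((m:ℝ)-1)⁻¹ • ξv with hu_def
  have hu : MQ.mulVec u = w := by
    rw [hu_def, Matrix.mulVec_smul, hmulvec, smul_smul, inv_mul_cancel₀ hr, one_smul]
  have hMf : (Matrix.of fun i j : Fin n => fderiv ℝ (fderiv ℝ f) ξ (e i) (e j))
      = a • MQ + d • Matrix.vecMulVec w w := by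
    ext i j
    rw [Matrix.of_apply, hsnd]
    simp only [ContinuousLinearMap.add_apply, ContinuousLinearMap.smul_apply,
      ContinuousLinearMap.smulRight_apply, smul_eq_mul, Matrix.add_apply, Matrix.smul_apply,
      Matrix.vecMulVec_apply, Matrix.of_apply, hMQ, hw]
    ring
  have hdecomp : a • MQ + d • Matrix.vecMulVec w w
      = MQ * (a • 1 + d • (Matrix.replicateCol (Fin 1) u * Matrix.replicateRow (Fin 1) w)) := by
    rw [Matrix.mul_add, Matrix.mul_smul, Matrix.mul_one, Matrix.mul_smul, ← Matrix.mul_assoc,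
      ← Matrix.replicateCol_mulVec, hu]
    exact congrArg _ (congrArg _ (Matrix.vecMulVec_eq (Fin 1) w w))
  have hdet2 : (a • (1:Matrix (Fin n) (Fin n) ℝ)
        + d • (Matrix.replicateCol (Fin 1) u * Matrix.replicateRow (Fin 1) w))
      = a • (1 + Matrix.replicateCol (Fin 1) ((a⁻¹ * d) • u) * Matrix.replicateRow (Fin 1) w) := by
    rw [smul_add]
    congr 1
    conv_rhs => rw [Matrix.replicateCol_smul, Matrix.smul_mul, smul_smul, ← mul_assoc,
      mul_inv_cancel₀ ha0, one_mul]
  have hwx : dotProduct w ξv = (m:ℝ) * q := by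
    have h2 : ∑ j, ξv j * L (e j) = L ξ := by
      rw [← hxsum, map_sum]
      simp
    calc dotProduct w ξv = ∑ j, ξv j * L (e j) := by
          simp [dotProduct, hw, mul_comm]
      _ = (m:ℝ) * q := by rw [h2, euler1]
  have had : a⁻¹ * d = -(1/(2*q)) := by
    rw [ha_def, hd_def, ← hsq]
    field_simp
  have hfactor : (1 + dotProduct w ((a⁻¹ * d) • u)) = 1 - (m:ℝ)/(2*((m:ℝ)-1)) := by
    rw [dotProduct_smul, hu_def, dotProduct_smul, hwx, had]
    have hq0 : q ≠ 0 := hq.ne'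
    simp only [smul_eq_mul]
    field_simp
    ring
  have hF : (1 + dotProduct w ((a⁻¹ * d) • u)) ≠ 0 := by
    rw [hfactor]
    have hm' : (4:ℝ) ≤ m := by exact_mod_cast hm4
    have h1 : (m:ℝ)/(2*((m:ℝ)-1)) < 1 := by
      rw [div_lt_one (by linarith)]
      linarith
    linarith
  have hdetf : (Matrix.of fun i j : Fin n => fderiv ℝ (fderiv ℝ f) ξ (e i) (e j)).det
      = MQ.det * (a ^ n * (1 + dotProduct w ((a⁻¹ * d) • u))) := by
    rw [hMf, hdecomp, Matrix.det_mul, hdet2, Matrix.det_smul]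
    erw [Matrix.det_one_add_replicateCol_mul_replicateRow]
    simp [Fintype.card_fin]
  rw [show (Matrix.of fun i j : Fin n => fderiv ℝ (fderiv ℝ f) ξ
      (EuclideanSpace.single i 1) (EuclideanSpace.single j 1))
      = Matrix.of fun i j : Fin n => fderiv ℝ (fderiv ℝ f) ξ (e i) (e j) from rfl, hdetf]
  exact mul_ne_zero hdetMQ (mul_ne_zero (pow_ne_zero n ha0) hF)
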